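/- Let q = 2^f, E = F_{q^2}, and T ⊆ E^* an F_q^*-invariant subset. Then the condition 'Σ_{t∈T} K(ψ_E, t, u) = q^2 − |T| for all u ∈ T, and = −|T| for all u ∈ E^* \ T' holds if and only if T = {t^{−1} : t ∈ T}. -/

import Mathlib

/-- The canonical additive character `ψ_K(x) = exp(2πi·Tr_{K/F_p}(x)/p)` of a finite
field `K` of characteristic `p`. -/
noncomputable def canChar (p : ℕ) (K : Type*) [Field K] [Fintype K] [Algebra (ZMod p) K]
    (x : K) : ℂ :=
  Complex.exp (2 * Real.pi * Complex.I * ((Algebra.trace (ZMod p) K x).val : ℂ) / (p : ℂ))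

/-- The Kloosterman sum `K(ψ_F, a1, a2) = Σ_{x ∈ F^*} ψ_F(a1 x + a2 x^{-1})`. -/
noncomputable def kloosterman (p : ℕ) (F : Type*) [Field F] [Fintype F] [DecidableEq F]
    [Algebra (ZMod p) F] (a1 a2 : F) : ℂ :=
  ∑ x : Fˣ, canChar p F (a1 * (x : F) + a2 * (x : F)⁻¹)

section Aux
variable {E : Type*} [Field E] [Fintype E] [Algebra (ZMod 2) E]

lemma canChar_eq (x : E) :
    canChar 2 E x = (-1 : ℂ) ^ (Algebra.trace (ZMod 2) E x).val := by
  rw [canChar]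
  push_cast
  rw [show (2 : ℂ) * Real.pi * Complex.I * ((Algebra.trace (ZMod 2) E x).val : ℂ) / (2 : ℂ)
      = ((Algebra.trace (ZMod 2) E x).val : ℂ) * (Real.pi * Complex.I) by ring,
    Complex.exp_nat_mul, Complex.exp_pi_mul_I]

lemma neg_one_pow_val_add (a b : ZMod 2) :
    ((-1 : ℂ)) ^ (a + b).val = (-1 : ℂ) ^ a.val * (-1 : ℂ) ^ b.val := by
  have h2 : ((-1 : ℂ)) ^ (2 : ℕ) = 1 := by norm_num
  rw [ZMod.val_add, ← pow_eq_pow_mod _ h2, pow_add]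

lemma canChar_add (x y : E) : canChar 2 E (x + y) = canChar 2 E x * canChar 2 E y := by
  rw [canChar_eq, canChar_eq, canChar_eq, map_add, neg_one_pow_val_add]

lemma canChar_zero : canChar 2 E (0 : E) = 1 := by
  rw [canChar_eq, map_zero]; norm_num

lemma canChar_of_trace_eq_zero {x : E} (h : Algebra.trace (ZMod 2) E x = 0) :
    canChar 2 E x = 1 := by
  rw [canChar_eq, h]; norm_num

lemma canChar_of_trace_ne_zero {x : E} (h : Algebra.trace (ZMod 2) E x ≠ 0) :
    canChar 2 E x = -1 := by
  have hval : (Algebra.trace (ZMod 2) E x).val = 1 := by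
    have h1 := ZMod.val_lt (Algebra.trace (ZMod 2) E x)
    have h2 : (Algebra.trace (ZMod 2) E x).val ≠ 0 := fun hc => h ((ZMod.val_eq_zero _).mp hc)
    omega
  rw [canChar_eq, hval, pow_one]

lemma sum_char_eq_zero {G : Type*} [Fintype G] [AddGroup G] (φ : G → ℂ)
    (hmul : ∀ a b, φ (a + b) = φ a * φ b) (g₀ : G) (h : φ g₀ ≠ 1) :
    ∑ x : G, φ x = 0 := by
  have h1 : ∑ x : G, φ x = ∑ x : G, φ (x + g₀) :=
    (Fintype.sum_equiv (Equiv.addRight g₀) (fun x => φ (x + g₀)) φ (fun x => rfl)).symm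
  have h2 : ∑ x : G, φ (x + g₀) = (∑ x : G, φ x) * φ g₀ := by
    rw [Finset.sum_mul]; exact Finset.sum_congr rfl fun x _ => hmul x g₀
  have h3 : (∑ x : G, φ x) * (φ g₀ - 1) = 0 := by
    rw [mul_sub, mul_one, ← h2, ← h1, sub_self]
  rcases mul_eq_zero.mp h3 with h4 | h4
  · exact h4
  · exact absurd (by linear_combination h4) h
variable {F E : Type*} [Field F] [Field E] [Fintype F] [Fintype E] [DecidableEq E]
    [Algebra (ZMod 2) F] [Algebra (ZMod 2) E] [Algebra F E] [IsScalarTower (ZMod 2) F E]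

lemma finrank_eq_two (hcard : Fintype.card E = Fintype.card F ^ 2) : Module.finrank F E = 2 := by
  have hfd : Module.Finite F E := Module.Finite.of_finite
  have h := Module.card_eq_pow_finrank (K := F) (V := E)
  rw [hcard] at h
  exact (Nat.pow_right_injective Fintype.one_lt_card h.symm)

lemma two_eq_zero : (2 : F) = 0 := by
  have hz : (2 : ZMod 2) = 0 := by decide
  have h : algebraMap (ZMod 2) F 2 = (2 : F) := map_ofNat _ 2
  rw [hz, map_zero] at h
  exact h.symm

lemma trace_amap (hcard : Fintype.card E = Fintype.card F ^ 2) (c : F) :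
    Algebra.trace (ZMod 2) E (algebraMap F E c) = 0 := by
  have : Fact (Nat.Prime 2) := ⟨Nat.prime_two⟩
  have hfd : Module.Finite F E := Module.Finite.of_finite
  have hfd2 : Module.Finite (ZMod 2) F := Module.Finite.of_finite
  have hsmul : (2 : ℕ) • c = 0 := by
    rw [two_smul, ← two_mul, two_eq_zero, zero_mul]
  rw [← Algebra.trace_trace (S := F), Algebra.trace_algebraMap, finrank_eq_two hcard,
    hsmul, map_zero]

lemma exists_trace_ne_zero : ∃ x : E, Algebra.trace (ZMod 2) E x ≠ 0 := by
  have : Fact (Nat.Prime 2) := ⟨Nat.prime_two⟩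
  have hfd : Module.Finite (ZMod 2) E := Module.Finite.of_finite
  by_contra h
  push_neg at h
  exact Algebra.trace_ne_zero (ZMod 2) E (by ext x; exact h x)

variable (F E) in
/-- The `F`-subspace of `w : E` with `Tr(cw) = 0` for all `c`. -/
def Wsub : Submodule F E where
  carrier := {w | ∀ c : F, Algebra.trace (ZMod 2) E (algebraMap F E c * w) = 0}
  add_mem' := by
    intro a b ha hb c
    rw [mul_add, map_add, ha c, hb c, add_zero]
  zero_mem' := by intro c; rw [mul_zero, map_zero]
  smul_mem' := by
    intro d w hw c
    rw [Algebra.smul_def, show algebraMap F E c * (algebraMap F E d * w)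
      = algebraMap F E (c * d) * w by rw [map_mul]; ring]
    exact hw (c * d)

lemma mem_Wsub_iff (hcard : Fintype.card E = Fintype.card F ^ 2) (w : E) :
    w ∈ Wsub F E ↔ ∃ c : F, w = algebraMap F E c := by
  have : Fact (Nat.Prime 2) := ⟨Nat.prime_two⟩
  have hfd : Module.Finite F E := Module.Finite.of_finite
  have hspan : Submodule.span F {(1 : E)} ≤ Wsub F E := by
    rw [Submodule.span_singleton_le_iff_mem]
    intro c
    rw [mul_one]
    exact trace_amap hcard c
  have hne : Wsub F E ≠ ⊤ := by
    intro htop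
    obtain ⟨x, hx⟩ := exists_trace_ne_zero (E := E)
    have hxW : x ∈ Wsub F E := htop ▸ Submodule.mem_top
    have := hxW 1
    rw [map_one, one_mul] at this
    exact hx this
  have h1 : Module.finrank F (Submodule.span F {(1 : E)}) = 1 :=
    finrank_span_singleton one_ne_zero
  have hWlt : Module.finrank F (Wsub F E) < 2 := by
    rw [← finrank_eq_two (F := F) (E := E) hcard]
    exact Submodule.finrank_lt hne
  have hWge : 1 ≤ Module.finrank F (Wsub F E) := by
    rw [← h1]
    exact Submodule.finrank_mono hspan
  have heq : Submodule.span F {(1 : E)} = Wsub F E :=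
    Submodule.eq_of_le_of_finrank_eq hspan (by omega)
  rw [← heq, Submodule.mem_span_singleton]
  constructor
  · rintro ⟨c, rfl⟩; exact ⟨c, by rw [Algebra.smul_def, mul_one]⟩
  · rintro ⟨c, rfl⟩; exact ⟨c, by rw [Algebra.smul_def, mul_one]⟩

lemma sum_F_char_mem (w : E) (hw : w ∈ Wsub F E) :
    ∑ c : F, canChar 2 E (algebraMap F E c * w) = (Fintype.card F : ℂ) := by
  rw [Finset.sum_congr rfl (fun c _ => canChar_of_trace_eq_zero (hw c))]
  simp

lemma sum_F_char_not_mem (w : E) (hw : w ∉ Wsub F E) :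
    ∑ c : F, canChar 2 E (algebraMap F E c * w) = 0 := by
  have : ∃ c : F, Algebra.trace (ZMod 2) E (algebraMap F E c * w) ≠ 0 := by
    by_contra h
    push_neg at h
    exact hw h
  obtain ⟨c₀, hc₀⟩ := this
  refine sum_char_eq_zero (fun c => canChar 2 E (algebraMap F E c * w)) ?_ c₀ ?_
  · intro a b
    rw [map_add, add_mul, canChar_add]
  · rw [canChar_of_trace_ne_zero hc₀]
    norm_num

lemma sum_E_char {a : E} (ha : a ≠ 0) : ∑ x : E, canChar 2 E (a * x) = 0 := by
  obtain ⟨y, hy⟩ := exists_trace_ne_zero (E := E)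
  refine sum_char_eq_zero (fun x => canChar 2 E (a * x)) ?_ (a⁻¹ * y) ?_
  · intro b c
    rw [mul_add, canChar_add]
  · rw [← mul_assoc, mul_inv_cancel₀ ha, one_mul, canChar_of_trace_ne_zero hy]
    norm_num

lemma sum_units_eq (g : E → ℂ) :
    ∑ x : Eˣ, g ↑x = ∑ x ∈ Finset.univ.erase (0 : E), g x := by
  refine Finset.sum_bij' (fun (x : Eˣ) _ => (x : E))
    (fun x hx => Units.mk0 x (Finset.mem_erase.mp hx).1) ?_ ?_ ?_ ?_ ?_
  · intro a _
    exact Finset.mem_erase.mpr ⟨a.ne_zero, Finset.mem_univ _⟩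
  · intro a _; exact Finset.mem_univ _
  · intro a _; exact Units.ext rfl
  · intro a ha; rfl
  · intro a _; rfl

lemma sum_units_char {u : E} (hu : u ≠ 0) :
    ∑ x : Eˣ, canChar 2 E (u * ↑x) = -1 := by
  rw [sum_units_eq (fun x => canChar 2 E (u * x))]
  have h := sum_E_char (E := E) hu
  rw [← Finset.add_sum_erase _ _ (Finset.mem_univ (0 : E))] at h
  rw [mul_zero, canChar_zero] at h
  linear_combination h

lemma key_identity (hcard : Fintype.card E = Fintype.card F ^ 2)
    (T : Finset E) (hT0 : ∀ t ∈ T, t ≠ 0)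
    (hinv : ∀ t ∈ T, ∀ c : F, c ≠ 0 → algebraMap F E c * t ∈ T)
    {z : E} (hz : z ≠ 0) :
    ((Fintype.card F : ℂ) - 1) * ∑ t ∈ T, canChar 2 E (t * z)
      = (Fintype.card F : ℂ) * ((Fintype.card F : ℂ) - 1) * (if z⁻¹ ∈ T then 1 else 0)
        - T.card := by
  classical
  set q := Fintype.card F with hq
  -- step 1 : invariance of the inner sum
  have hstep : ∀ c : F, c ≠ 0 →
      ∑ t ∈ T, canChar 2 E (algebraMap F E c * t * z) = ∑ t ∈ T, canChar 2 E (t * z) := by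
    intro c hc
    refine Finset.sum_nbij' (fun t => algebraMap F E c * t) (fun t => algebraMap F E c⁻¹ * t)
      (fun a ha => hinv a ha c hc) (fun a ha => hinv a ha c⁻¹ (inv_ne_zero hc)) ?_ ?_ ?_
    · intro a _
      rw [← mul_assoc, ← map_mul, inv_mul_cancel₀ hc, map_one, one_mul]
    · intro a _
      rw [← mul_assoc, ← map_mul, mul_inv_cancel₀ hc, map_one, one_mul]
    · intro a _; rfl
  -- step 2 : sum over nonzero c
  have h2 : ∑ c ∈ Finset.univ.erase (0 : F), ∑ t ∈ T, canChar 2 E (algebraMap F E c * t * z)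
      = ((q : ℂ) - 1) * ∑ t ∈ T, canChar 2 E (t * z) := by
    rw [Finset.sum_congr rfl fun c hc => hstep c (Finset.mem_erase.mp hc).1,
      Finset.sum_const, Finset.card_erase_of_mem (Finset.mem_univ _), Finset.card_univ,
      nsmul_eq_mul]
    rw [← hq]
    congr 1
    have : 1 ≤ q := Fintype.card_pos
    push_cast [Nat.cast_sub this]
    ring
  -- step 3 : swap and evaluate inner sums over F
  have h3 : ∑ c ∈ Finset.univ.erase (0 : F), ∑ t ∈ T, canChar 2 E (algebraMap F E c * t * z)
      = ∑ t ∈ T, ((∑ c : F, canChar 2 E (algebraMap F E c * (t * z))) - 1) := by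
    rw [Finset.sum_comm]
    refine Finset.sum_congr rfl fun t _ => ?_
    rw [Finset.sum_erase_eq_sub (Finset.mem_univ (0 : F)), map_zero, zero_mul, zero_mul,
      canChar_zero]
    refine congrArg (· - 1) (Finset.sum_congr rfl fun c _ => by rw [mul_assoc])
  -- step 4 : each inner sum
  have h4 : ∑ t ∈ T, ((∑ c : F, canChar 2 E (algebraMap F E c * (t * z))) - 1)
      = (q : ℂ) * (T.filter (fun t => ∃ c : F, t * z = algebraMap F E c)).card - T.card := by
    rw [Finset.sum_sub_distrib, Finset.sum_const, nsmul_eq_mul, mul_one]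
    congr 1
    rw [← Finset.sum_filter_add_sum_filter_not T (fun t => ∃ c : F, t * z = algebraMap F E c)]
    have hA : ∀ t ∈ T.filter (fun t => ∃ c : F, t * z = algebraMap F E c),
        ∑ c : F, canChar 2 E (algebraMap F E c * (t * z)) = (q : ℂ) := by
      intro t ht
      exact sum_F_char_mem _ ((mem_Wsub_iff hcard (t * z)).mpr (Finset.mem_filter.mp ht).2)
    have hB : ∀ t ∈ T.filter (fun t => ¬∃ c : F, t * z = algebraMap F E c),
        ∑ c : F, canChar 2 E (algebraMap F E c * (t * z)) = 0 := by
      intro t ht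
      refine sum_F_char_not_mem _ (fun hw => (Finset.mem_filter.mp ht).2 ?_)
      exact (mem_Wsub_iff hcard (t * z)).mp hw
    rw [Finset.sum_congr rfl hA, Finset.sum_congr rfl hB, Finset.sum_const, Finset.sum_const,
      nsmul_eq_mul, nsmul_eq_mul, mul_zero, add_zero, mul_comm]
  -- step 5 : counting
  have h5 : (T.filter (fun t => ∃ c : F, t * z = algebraMap F E c)).card
      = if z⁻¹ ∈ T then q - 1 else 0 := by
    by_cases hzT : z⁻¹ ∈ T
    · rw [if_pos hzT]
      have heq : T.filter (fun t => ∃ c : F, t * z = algebraMap F E c)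
          = (Finset.univ.erase (0 : F)).image (fun c => algebraMap F E c * z⁻¹) := by
        ext t
        simp only [Finset.mem_filter, Finset.mem_image, Finset.mem_erase, Finset.mem_univ,
          and_true]
        constructor
        · rintro ⟨htT, c, hc⟩
          have hc0 : c ≠ 0 := by
            rintro rfl
            rw [map_zero] at hc
            exact hT0 t htT (by
              have := mul_eq_zero.mp hc
              tauto)
          refine ⟨c, hc0, ?_⟩
          rw [← hc, mul_assoc, mul_inv_cancel₀ hz, mul_one]
        · rintro ⟨c, hc0, rfl⟩
          refine ⟨hinv _ hzT c hc0, c, ?_⟩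
          field_simp
      rw [heq, Finset.card_image_of_injOn, Finset.card_erase_of_mem (Finset.mem_univ _),
        Finset.card_univ]
      intro a _ b _ hab
      have := mul_right_cancel₀ (inv_ne_zero hz) hab
      exact (algebraMap F E).injective this
    · rw [if_neg hzT]
      rw [Finset.card_eq_zero, Finset.filter_eq_empty_iff]
      rintro t htT ⟨c, hc⟩
      have hc0 : c ≠ 0 := by
        rintro rfl
        rw [map_zero] at hc
        exact hT0 t htT (by
          have := mul_eq_zero.mp hc
          tauto)
      refine hzT ?_
      have ht0 := hT0 t htT
      have : z⁻¹ = algebraMap F E c⁻¹ * t := by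
        rw [map_inv₀, ← hc, mul_inv, mul_comm t⁻¹ z⁻¹, mul_assoc, inv_mul_cancel₀ ht0, mul_one]
      rw [this]
      exact hinv _ htT c⁻¹ (inv_ne_zero hc0)
  rw [← h2, h3, h4, h5]
  by_cases hzT : z⁻¹ ∈ T
  · rw [if_pos hzT, if_pos hzT]
    have : 1 ≤ q := Fintype.card_pos
    push_cast [Nat.cast_sub this]
    ring
  · rw [if_neg hzT, if_neg hzT]
    push_cast
    ring

lemma main_formula (hcard : Fintype.card E = Fintype.card F ^ 2)
    (T : Finset E) (hT0 : ∀ t ∈ T, t ≠ 0)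
    (hinv : ∀ t ∈ T, ∀ c : F, c ≠ 0 → algebraMap F E c * t ∈ T)
    {u : E} (hu : u ≠ 0) :
    ∑ t ∈ T, kloosterman 2 E t u
      = (Fintype.card F : ℂ) ^ 2 * (if u⁻¹ ∈ T then 1 else 0) - T.card := by
  classical
  set q := Fintype.card F with hqdef
  have hq2 : (2 : ℕ) ≤ q := Fintype.one_lt_card
  have hq1 : ((q : ℂ) - 1) ≠ 0 := by
    intro h
    have : (q : ℂ) = 1 := by linear_combination h
    have : q = 1 := by exact_mod_cast this
    omega
  -- Step A–C : rewrite the double sum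
  have hA : ∑ t ∈ T, kloosterman 2 E t u
      = ∑ x ∈ Finset.univ.erase (0 : E), (∑ t ∈ T, canChar 2 E (t * x⁻¹)) * canChar 2 E (u * x) := by
    unfold kloosterman
    rw [Finset.sum_comm]
    have h1 : ∀ x : Eˣ, ∑ t ∈ T, canChar 2 E (t * ↑x + u * (↑x)⁻¹)
        = (∑ t ∈ T, canChar 2 E (t * ↑x)) * canChar 2 E (u * (↑x)⁻¹) := by
      intro x
      rw [Finset.sum_mul]
      exact Finset.sum_congr rfl fun t _ => canChar_add _ _
    rw [Finset.sum_congr rfl fun x _ => h1 x]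
    have h2 : ∑ x : Eˣ, (∑ t ∈ T, canChar 2 E (t * ↑x)) * canChar 2 E (u * (↑x)⁻¹)
        = ∑ x : Eˣ, (∑ t ∈ T, canChar 2 E (t * (↑x)⁻¹)) * canChar 2 E (u * ↑x) := by
      refine Fintype.sum_equiv (Equiv.inv Eˣ) _ _ fun x => ?_
      simp only [Equiv.inv_apply, Units.val_inv_eq_inv_val, inv_inv]
    rw [h2, sum_units_eq (fun x => (∑ t ∈ T, canChar 2 E (t * x⁻¹)) * canChar 2 E (u * x))]
  -- Step E : sum of the character over nonzero elements
  have hE : ∑ x ∈ Finset.univ.erase (0 : E), canChar 2 E (u * x) = -1 := by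
    rw [Finset.sum_erase_eq_sub (Finset.mem_univ (0 : E)), sum_E_char hu, mul_zero, canChar_zero]
    ring
  -- Step F : sum over T
  have hF : ∑ x ∈ Finset.univ.erase (0 : E), (if x ∈ T then (1 : ℂ) else 0) * canChar 2 E (u * x)
      = ∑ t ∈ T, canChar 2 E (t * u) := by
    simp only [ite_mul, one_mul, zero_mul]
    rw [Finset.sum_ite_mem]
    have : Finset.univ.erase (0 : E) ∩ T = T := by
      rw [Finset.inter_eq_right]
      intro t ht
      exact Finset.mem_erase.mpr ⟨hT0 t ht, Finset.mem_univ _⟩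
    rw [this]
    exact Finset.sum_congr rfl fun t _ => by rw [mul_comm]
  -- Step D : multiply by (q-1)
  have hS1 : ((q : ℂ) - 1) * ∑ t ∈ T, kloosterman 2 E t u
      = (q : ℂ) * ((q : ℂ) - 1) * (∑ t ∈ T, canChar 2 E (t * u)) + T.card := by
    rw [hA, Finset.mul_sum]
    have hterm : ∀ x ∈ Finset.univ.erase (0 : E),
        ((q : ℂ) - 1) * ((∑ t ∈ T, canChar 2 E (t * x⁻¹)) * canChar 2 E (u * x))
          = (q : ℂ) * ((q : ℂ) - 1) * ((if x ∈ T then (1 : ℂ) else 0) * canChar 2 E (u * x))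
            - (T.card : ℂ) * canChar 2 E (u * x) := by
      intro x hx
      have hx0 : x ≠ 0 := (Finset.mem_erase.mp hx).1
      have hk := key_identity hcard T hT0 hinv (inv_ne_zero hx0)
      rw [inv_inv] at hk
      calc ((q : ℂ) - 1) * ((∑ t ∈ T, canChar 2 E (t * x⁻¹)) * canChar 2 E (u * x))
          = (((q : ℂ) - 1) * ∑ t ∈ T, canChar 2 E (t * x⁻¹)) * canChar 2 E (u * x) := by ring
        _ = ((q : ℂ) * ((q : ℂ) - 1) * (if x ∈ T then (1 : ℂ) else 0) - T.card)
              * canChar 2 E (u * x) := by rw [hk]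
        _ = _ := by ring
    rw [Finset.sum_congr rfl hterm, Finset.sum_sub_distrib, ← Finset.mul_sum, ← Finset.mul_sum,
      hE, hF]
    ring
  -- Step G : key identity at z = u
  have hG := key_identity hcard T hT0 hinv hu
  -- Step H : cancel
  refine mul_left_cancel₀ (mul_ne_zero hq1 hq1) ?_
  calc (((q : ℂ) - 1) * ((q : ℂ) - 1)) * ∑ t ∈ T, kloosterman 2 E t u
      = ((q : ℂ) - 1) * (((q : ℂ) - 1) * ∑ t ∈ T, kloosterman 2 E t u) := by ring
    _ = ((q : ℂ) - 1) * ((q : ℂ) * ((q : ℂ) - 1) * (∑ t ∈ T, canChar 2 E (t * u)) + T.card) := by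
        rw [hS1]
    _ = (q : ℂ) * (((q : ℂ) - 1) * ∑ t ∈ T, canChar 2 E (t * u)) * ((q : ℂ) - 1)
          + ((q : ℂ) - 1) * T.card := by ring
    _ = (q : ℂ) * ((q : ℂ) * ((q : ℂ) - 1) * (if u⁻¹ ∈ T then 1 else 0) - T.card) * ((q : ℂ) - 1)
          + ((q : ℂ) - 1) * T.card := by rw [hG]
    _ = (((q : ℂ) - 1) * ((q : ℂ) - 1)) * ((q : ℂ) ^ 2 * (if u⁻¹ ∈ T then 1 else 0) - T.card) := by
        ring

end Aux

open Classical in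
/-- Let `q = 2^f`, `E = F_{q^2}` with subfield `F = F_q`, and `T ⊆ E^*` an
`F_q^*`-invariant subset.  Then
`Σ_{t∈T} K(ψ_E,t,u) = q^2 − |T|` for all `u ∈ T` and `= −|T|` for all
`u ∈ E^* \ T`, if and only if `T = {t⁻¹ : t ∈ T}`. -/
theorem stmt10 (F E : Type*) [Field F] [Field E] [Fintype F] [Fintype E] [DecidableEq E]
    [Algebra (ZMod 2) F] [Algebra (ZMod 2) E] [Algebra F E] [IsScalarTower (ZMod 2) F E]
    (hcard : Fintype.card E = Fintype.card F ^ 2)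
    (T : Finset E) (hT0 : ∀ t ∈ T, t ≠ 0)
    (hinv : ∀ t ∈ T, ∀ c : F, c ≠ 0 → algebraMap F E c * t ∈ T) :
    ((∀ u ∈ T, ∑ t ∈ T, kloosterman 2 E t u = (Fintype.card F : ℂ) ^ 2 - T.card) ∧
      (∀ u : E, u ≠ 0 → u ∉ T → ∑ t ∈ T, kloosterman 2 E t u = -(T.card : ℂ)))
    ↔ T.image (fun t => t⁻¹) = T := by
  have hqC : ((Fintype.card F : ℂ)) ^ 2 ≠ 0 := by
    exact pow_ne_zero 2 (Nat.cast_ne_zero.mpr Fintype.card_ne_zero)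
  constructor
  · rintro ⟨h1, h2⟩
    have hmem : ∀ u ∈ T, u⁻¹ ∈ T := by
      intro u hu
      have hu0 := hT0 u hu
      have hf := h1 u hu
      rw [main_formula hcard T hT0 hinv hu0] at hf
      by_contra hc
      rw [if_neg hc] at hf
      exact hqC (by linear_combination -hf)
    apply Finset.Subset.antisymm
    · intro x hx
      obtain ⟨t, ht, rfl⟩ := Finset.mem_image.mp hx
      exact hmem t ht
    · intro t ht
      exact Finset.mem_image.mpr ⟨t⁻¹, hmem t ht, inv_inv t⟩
  · intro himg
    have hmem : ∀ u ∈ T, u⁻¹ ∈ T := by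
      intro u hu
      rw [← himg]
      exact Finset.mem_image.mpr ⟨u, hu, rfl⟩
    constructor
    · intro u hu
      rw [main_formula hcard T hT0 hinv (hT0 u hu), if_pos (hmem u hu), mul_one]
    · intro u hu0 huT
      have hninv : u⁻¹ ∉ T := by
        intro hc
        exact huT (by rw [← inv_inv u]; exact hmem u⁻¹ hc)
      rw [main_formula hcard T hT0 hinv hu0, if_neg hninv, mul_zero, zero_sub]
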